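/- Let G=(V,E) be a 3-manifold and let ψ:V→ℂ with Re ψ and Im ψ nowhere zero on V. Then the level set {ψ=0} is either the empty graph or a disjoint union of cyclic graphs C_n with n≥4. -/

import Mathlib

open scoped Classical

/-- A finite simple graph: a finite vertex set together with a symmetric, irreflexive
adjacency relation supported on the vertex set. -/
structure FGraph (V : Type) where
  verts : Finset V
  Adj : V → V → Prop
  symm : ∀ {a b}, Adj a b → Adj b a
  loopless : ∀ a, ¬ Adj a a
  mem_of_adj : ∀ {a b}, Adj a b → a ∈ verts

namespace FGraph

variable {V W : Type}

/-- The subgraph induced on the vertices satisfying `P`. -/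
noncomputable def induce (G : FGraph V) (P : V → Prop) : FGraph V where
  verts := G.verts.filter P
  Adj a b := G.Adj a b ∧ P a ∧ P b
  symm h := ⟨G.symm h.1, h.2.2, h.2.1⟩
  loopless a h := G.loopless a h.1
  mem_of_adj h := Finset.mem_filter.mpr ⟨G.mem_of_adj h.1, h.2.1⟩

/-- The unit sphere of a vertex: the subgraph induced on its neighbors. -/
noncomputable def unitSphere (G : FGraph V) (v : V) : FGraph V :=
  G.induce (fun w => G.Adj v w)

/-- The graph with the vertex `v` (and its edges) removed. -/
noncomputable def erase (G : FGraph V) (v : V) : FGraph V :=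
  G.induce (fun w => w ≠ v)

/-- Inductive definition of contractibility: the one-point graph is contractible, and a
graph is contractible if some vertex has a contractible unit sphere and contractible
complement. -/
inductive Contractible : FGraph V → Prop
  | single (G : FGraph V) (v : V) (h : G.verts = {v}) : Contractible G
  | step (G : FGraph V) (v : V) (hv : v ∈ G.verts)
      (h1 : Contractible (G.unitSphere v)) (h2 : Contractible (G.erase v)) :
      Contractible G

mutual
  /-- `G` is a `d`-sphere: the empty graph is the `(-1)`-sphere, and a `d`-manifold is a
  `d`-sphere if removing some vertex renders it contractible. -/
  inductive IsSphere : ℤ → FGraph V → Prop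
    | empty (G : FGraph V) (h : G.verts = ∅) : IsSphere (-1) G
    | punctured (d : ℤ) (G : FGraph V) (hm : IsManifold d G) (v : V) (hv : v ∈ G.verts)
        (hc : Contractible (G.erase v)) : IsSphere d G
  /-- For `d ≥ 0`, `G` is a `d`-manifold iff every unit sphere is a `(d-1)`-sphere. -/
  inductive IsManifold : ℤ → FGraph V → Prop
    | intro (d : ℤ) (hd : 0 ≤ d) (G : FGraph V)
        (h : ∀ v ∈ G.verts, IsSphere (d - 1) (G.unitSphere v)) : IsManifold d G
end

/-- A simplex of `G`: the vertex set of a complete subgraph. -/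
def IsSimplex (G : FGraph V) (x : Finset V) : Prop :=
  x.Nonempty ∧ ↑x ⊆ G.verts ∧ ∀ a ∈ x, ∀ b ∈ x, a ≠ b → G.Adj a b

/-- The Barycentric refinement: vertices are the simplices of `G`, two being adjacent iff
one is strictly contained in the other. -/
noncomputable def barycentric (G : FGraph V) : FGraph (Finset V) where
  verts := G.verts.powerset.filter (fun x => G.IsSimplex x)
  Adj x y := G.IsSimplex x ∧ G.IsSimplex y ∧ (x ⊂ y ∨ y ⊂ x)
  symm h := ⟨h.2.1, h.1, h.2.2.symm⟩
  loopless x h := by rcases h.2.2 with h' | h' <;> exact (ssubset_irrefl x h')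
  mem_of_adj h := Finset.mem_filter.mpr ⟨Finset.mem_powerset.mpr h.1.2.1, h.1⟩

/-- Number of simplices of `G` with exactly `j` vertices (so `numSimplices G (k+1)` is
the `f`-vector entry `f_k(G)`). -/
noncomputable def numSimplices (G : FGraph V) (j : ℕ) : ℕ :=
  (G.verts.powerset.filter (fun x => G.IsSimplex x ∧ x.card = j)).card

/-- Euler characteristic `χ(G) = Σ_{k ≥ 0} (-1)^k f_k(G)`, where `f_k` counts the
simplices with `k+1` vertices. -/
noncomputable def euler (G : FGraph V) : ℤ :=
  ∑ k ∈ Finset.range G.verts.card, (-1 : ℤ) ^ k * G.numSimplices (k + 1)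

/-- The level set `{f = c}`: the subgraph of the Barycentric refinement induced by the
simplices on which `f - c` changes sign. -/
noncomputable def levelSet (G : FGraph V) (f : V → ℝ) (c : ℝ) : FGraph (Finset V) :=
  G.barycentric.induce (fun x => (∃ a ∈ x, f a - c < 0) ∧ (∃ b ∈ x, 0 < f b - c))

/-- Graph isomorphism. -/
def Iso (G : FGraph V) (H : FGraph W) : Prop :=
  ∃ φ : V → W, Set.BijOn φ ↑G.verts ↑H.verts ∧
    ∀ a ∈ G.verts, ∀ b ∈ G.verts, (G.Adj a b ↔ H.Adj (φ a) (φ b))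

/-- Zykov join of two graphs: disjoint union plus all edges between the two parts. -/
noncomputable def join (G : FGraph V) (H : FGraph W) : FGraph (V ⊕ W) where
  verts := G.verts.disjSum H.verts
  Adj a b :=
    match a, b with
    | .inl a, .inl b => G.Adj a b
    | .inr a, .inr b => H.Adj a b
    | .inl a, .inr b => a ∈ G.verts ∧ b ∈ H.verts
    | .inr a, .inl b => b ∈ G.verts ∧ a ∈ H.verts
  symm {a b} h := by
    cases a <;> cases b <;> simp_all <;> first | exact G.symm h | exact H.symm h
  loopless a h := by
    cases a <;> simp_all <;> first | exact G.loopless _ h | exact H.loopless _ h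
  mem_of_adj {a b} h := by
    cases a <;> cases b <;> simp_all [Finset.mem_disjSum] <;>
      first | exact G.mem_of_adj h | exact H.mem_of_adj h

/-- Union of two graphs on the same vertex type. -/
noncomputable def union (G H : FGraph V) : FGraph V where
  verts := G.verts ∪ H.verts
  Adj a b := G.Adj a b ∨ H.Adj a b
  symm h := h.imp G.symm H.symm
  loopless a h := h.elim (G.loopless a) (H.loopless a)
  mem_of_adj h :=
    h.elim (fun h' => Finset.mem_union_left _ (G.mem_of_adj h'))
      (fun h' => Finset.mem_union_right _ (H.mem_of_adj h'))

/-- A `d`-ball: a graph of the form `S - v` for a `d`-sphere `S` and a vertex `v` of `S`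
(up to graph isomorphism). -/
def IsBall (d : ℤ) (H : FGraph W) : Prop :=
  ∃ (S : FGraph ℕ) (v : ℕ), IsSphere d S ∧ v ∈ S.verts ∧ Iso H (S.erase v)

/-- A `d`-manifold with boundary: every unit sphere is a `(d-1)`-sphere or a `(d-1)`-ball. -/
def IsManifoldWithBoundary (d : ℤ) (G : FGraph V) : Prop :=
  ∀ v ∈ G.verts, IsSphere (d - 1) (G.unitSphere v) ∨ IsBall (d - 1) (G.unitSphere v)

/-- The cyclic graph `C_n` on the vertex set `Fin n`. -/
def cycleGraph (n : ℕ) : FGraph (Fin n) where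
  verts := Finset.univ
  Adj a b := a ≠ b ∧ ((a.val + 1) % n = b.val ∨ (b.val + 1) % n = a.val)
  symm h := ⟨h.1.symm, h.2.symm⟩
  loopless a h := h.1 rfl
  mem_of_adj _ := Finset.mem_univ _

/-- `G` is a disjoint union of cyclic graphs `C_n` with `n ≥ 4`: the vertex set splits
into pairwise disjoint pieces, edges never cross between pieces, and each piece induces
a graph isomorphic to a `C_n` with `n ≥ 4`. -/
def IsDisjointUnionOfCycles (G : FGraph V) : Prop :=
  ∃ P : Finset (Finset V),
    (∀ S ∈ P, ↑S ⊆ G.verts) ∧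
    (∀ S ∈ P, ∀ T ∈ P, S ≠ T → Disjoint S T) ∧
    (∀ v ∈ G.verts, ∃ S ∈ P, v ∈ S) ∧
    (∀ a b, G.Adj a b → ∀ S ∈ P, a ∈ S → b ∈ S) ∧
    (∀ S ∈ P, ∃ n, 4 ≤ n ∧ Iso (G.induce (· ∈ S)) (cycleGraph n))

/-- Poincaré–Hopf index `i_f(v) = 1 - χ(S^-_f(v))`. -/
noncomputable def pindex (G : FGraph V) (f : V → ℝ) (v : V) : ℤ :=
  1 - ((G.unitSphere v).induce (fun w => f w < f v)).euler

/-- Curvature `K(v) = Σ_{k ≥ 0} (-1)^k f_{k-1}(S(v))/(k+1)` with `f_{-1} = 1`. -/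
noncomputable def curvature (G : FGraph V) (v : V) : ℝ :=
  ∑ k ∈ Finset.range (G.verts.card + 1),
    (-1 : ℝ) ^ k * (if k = 0 then 1 else ((G.unitSphere v).numSimplices k : ℝ)) / (k + 1)

end FGraph

/-- `sign(a + i b) = sign(a) + i sign(b)`. -/
noncomputable def csgn (z : ℂ) : ℂ :=
  ⟨Real.sign z.re, Real.sign z.im⟩

/-- The set `U = {1+i, 1-i, -1+i, -1-i}` of possible values of `csgn`. -/
noncomputable def signU : Finset ℂ :=
  {1 + Complex.I, 1 - Complex.I, -1 + Complex.I, -1 - Complex.I}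

namespace FGraph

variable {V : Type}

/-- The set of values of `sign(ψ - c)` attained on the finite vertex set `x`. -/
noncomputable def signValues (ψ : V → ℂ) (c : ℂ) (x : Finset V) : Finset ℂ :=
  x.image (fun v => csgn (ψ v - c))

/-- The level set `{ψ = c}` of a complex-valued function: the subgraph of the Barycentric
refinement induced by the simplices on which `sign(ψ - c)` takes at least three distinct
values, including `-1+i` and `1-i`. -/
noncomputable def complexLevelSet (G : FGraph V) (ψ : V → ℂ) (c : ℂ) : FGraph (Finset V) :=
  G.barycentric.induce (fun x =>
    3 ≤ (signValues ψ c x).card ∧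
    (-1 + Complex.I) ∈ signValues ψ c x ∧ (1 - Complex.I) ∈ signValues ψ c x)

/-- The level set `{ψ = 0}_e` for a two-element subset `e ⊆ U`: the subgraph of the
Barycentric refinement induced by the simplices on which `sign(ψ)` attains both values
of `e` and at least three distinct values in total. -/
noncomputable def complexLevelSetE (G : FGraph V) (ψ : V → ℂ) (e : Finset ℂ) :
    FGraph (Finset V) :=
  G.barycentric.induce (fun x =>
    (∀ u ∈ e, u ∈ signValues ψ 0 x) ∧ 3 ≤ (signValues ψ 0 x).card)

/-- `Ψ^{-1}(t)`: the subgraph of the Barycentric refinement induced by the simplices on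
which `sign(ψ)` attains all values of `t`. -/
noncomputable def signPreimage (G : FGraph V) (ψ : V → ℂ) (t : Finset ℂ) :
    FGraph (Finset V) :=
  G.barycentric.induce (fun x => ∀ u ∈ t, u ∈ signValues ψ 0 x)

/-- The sign vectors of `F - c` attained on the finite vertex set `x`. -/
noncomputable def vecSignValues {k : ℕ} (F : V → Fin k → ℝ) (c : Fin k → ℝ)
    (x : Finset V) : Finset (Fin k → ℝ) :=
  x.image (fun v j => Real.sign (F v j - c j))

/-- The level set `{F = c}` of an `ℝ^k`-valued function: the subgraph of the Barycentric
refinement induced by the simplices on which the sign vector of `F - c` takes at least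
`k+1` distinct values, including the `k` vectors `(1,…,1,-1,1,…,1)`. -/
noncomputable def vecLevelSet (G : FGraph V) {k : ℕ} (F : V → Fin k → ℝ) (c : Fin k → ℝ) :
    FGraph (Finset V) :=
  G.barycentric.induce (fun x =>
    k + 1 ≤ (vecSignValues F c x).card ∧
    ∀ j : Fin k, (fun i => if i = j then (-1 : ℝ) else 1) ∈ vecSignValues F c x)

end FGraph

/-- The complete graph on `Fin n`. -/
def completeFGraph (n : ℕ) : FGraph (Fin n) where
  verts := Finset.univ
  Adj a b := a ≠ b
  symm h := h.symm
  loopless a h := h rfl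
  mem_of_adj _ := Finset.mem_univ _

/-- Stirling numbers of the second kind. -/
def stirling2 : ℕ → ℕ → ℕ
  | 0, 0 => 1
  | 0, _ + 1 => 0
  | _ + 1, 0 => 0
  | n + 1, m + 1 => (m + 1) * stirling2 n (m + 1) + stirling2 n m
namespace FGraph

variable {V : Type}

lemma mem_induce_verts {G : FGraph V} {P : V → Prop} {w : V} :
    w ∈ (G.induce P).verts ↔ w ∈ G.verts ∧ P w := Finset.mem_filter

lemma mem_unitSphere_verts {G : FGraph V} {v w : V} :
    w ∈ (G.unitSphere v).verts ↔ w ∈ G.verts ∧ G.Adj v w := Finset.mem_filter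

lemma contractible_nonempty {G : FGraph V} (h : G.Contractible) : G.verts.Nonempty := by
  cases h with
  | single G v hv => exact ⟨v, hv ▸ Finset.mem_singleton_self v⟩
  | step G v hv h1 h2 => exact ⟨v, hv⟩

lemma contractible_edgeless {G : FGraph V} (h : G.Contractible)
    (he : ∀ a b, ¬ G.Adj a b) : ∃ v, G.verts = {v} := by
  cases h with
  | single G v hv => exact ⟨v, hv⟩
  | step G v hv h1 h2 =>
    obtain ⟨w, hw⟩ := contractible_nonempty h1
    exact absurd (mem_unitSphere_verts.mp hw).2 (he v w)

lemma isManifold_elim {d : ℤ} {G : FGraph V} (h : IsManifold d G) :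
    0 ≤ d ∧ ∀ v ∈ G.verts, IsSphere (d - 1) (G.unitSphere v) := by
  cases h with
  | intro d hd G h => exact ⟨hd, h⟩

lemma isSphere_elim {d : ℤ} {G : FGraph V} (h : IsSphere d G) :
    (d = -1 ∧ G.verts = ∅) ∨
      (IsManifold d G ∧ ∃ v ∈ G.verts, Contractible (G.erase v)) := by
  cases h with
  | empty G h => exact Or.inl ⟨rfl, h⟩
  | punctured d G hm v hv hc => exact Or.inr ⟨hm, v, hv, hc⟩

lemma isSphere_isManifold {d : ℤ} {G : FGraph V} (h : IsSphere d G) (hd : 0 ≤ d) :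
    IsManifold d G := by
  rcases isSphere_elim h with ⟨h1, _⟩ | ⟨hm, _⟩
  · omega
  · exact hm

lemma sphere_neg_one_verts {G : FGraph V} (h : IsSphere (-1) G) : G.verts = ∅ := by
  rcases isSphere_elim h with ⟨_, h2⟩ | ⟨hm, _⟩
  · exact h2
  · exact absurd (isManifold_elim hm).1 (by norm_num)

lemma manifold_zero_no_adj {G : FGraph V} (h : IsManifold 0 G) :
    ∀ a b, ¬ G.Adj a b := by
  intro a b hab
  have ha := G.mem_of_adj hab
  have hs := (isManifold_elim h).2 a ha
  have h0 : ((0 : ℤ) - 1) = -1 := by norm_num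
  rw [h0] at hs
  have hv := sphere_neg_one_verts hs
  have hb : b ∈ (G.unitSphere a).verts :=
    mem_unitSphere_verts.mpr ⟨G.mem_of_adj (G.symm hab), hab⟩
  simp [hv] at hb

lemma sphere_zero_struct {G : FGraph V} (h : IsSphere 0 G) :
    ∃ v w, v ≠ w ∧ G.verts = {v, w} ∧ ∀ a b, ¬ G.Adj a b := by
  rcases isSphere_elim h with ⟨h1, _⟩ | ⟨hm, v, hv, hc⟩
  · omega
  · have hne := manifold_zero_no_adj hm
    have he : ∀ a b, ¬ (G.erase v).Adj a b := fun a b hab => hne a b hab.1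
    obtain ⟨w, hw⟩ := contractible_edgeless hc he
    have hwv : w ∈ G.verts ∧ w ≠ v := by
      have : w ∈ (G.erase v).verts := hw ▸ Finset.mem_singleton_self w
      exact mem_induce_verts.mp this
    refine ⟨v, w, fun hvw => hwv.2 hvw.symm, ?_, hne⟩
    ext a
    simp only [Finset.mem_insert, Finset.mem_singleton]
    constructor
    · intro haG
      by_cases hav : a = v
      · exact Or.inl hav
      · have : a ∈ (G.erase v).verts := mem_induce_verts.mpr ⟨haG, hav⟩
        rw [hw] at this
        exact Or.inr (Finset.mem_singleton.mp this)
    · rintro (rfl | rfl)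
      · exact hv
      · exact hwv.1

lemma simplex_erase {G : FGraph V} {x : Finset V} (hx : G.IsSimplex x) {a : V}
    (ha : a ∈ x) (h2 : 1 < x.card) : (G.unitSphere a).IsSimplex (x.erase a) := by
  refine ⟨?_, ?_, ?_⟩
  · rw [← Finset.card_pos, Finset.card_erase_of_mem ha]; omega
  · intro w hw
    have hw' : w ∈ x.erase a := hw
    have hwx := Finset.mem_of_mem_erase hw'
    have hwa := Finset.ne_of_mem_erase hw'
    exact mem_unitSphere_verts.mpr ⟨hx.2.1 hwx, hx.2.2 a ha w hwx (Ne.symm hwa)⟩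
  · intro u hu w hw huw
    have huA := hx.2.2 a ha u (Finset.mem_of_mem_erase hu) (Ne.symm (Finset.ne_of_mem_erase hu))
    have hwA := hx.2.2 a ha w (Finset.mem_of_mem_erase hw) (Ne.symm (Finset.ne_of_mem_erase hw))
    exact ⟨hx.2.2 u (Finset.mem_of_mem_erase hu) w (Finset.mem_of_mem_erase hw) huw, huA, hwA⟩

lemma simplex_card_le (n : ℕ) : ∀ (G : FGraph V) (x : Finset V),
    IsManifold (n : ℤ) G → G.IsSimplex x → x.card ≤ n + 1 := by
  induction n with
  | zero =>
    intro G x hm hx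
    by_contra hcon
    push_neg at hcon
    have h1 : 1 < x.card := by omega
    obtain ⟨a, ha, b, hb, hne⟩ := Finset.one_lt_card.mp h1
    exact manifold_zero_no_adj hm a b (hx.2.2 a ha b hb hne)
  | succ n ih =>
    intro G x hm hx
    obtain ⟨a, ha⟩ := hx.1
    by_cases h1 : x.card ≤ 1
    · omega
    · push_neg at h1
      have hx' := simplex_erase hx ha h1
      have hs := (isManifold_elim hm).2 a (hx.2.1 ha)
      have h0 : ((n + 1 : ℕ) : ℤ) - 1 = (n : ℤ) := by push_cast; ring
      rw [h0] at hs
      have hm' : IsManifold (n : ℤ) (G.unitSphere a) :=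
        isSphere_isManifold hs (by positivity)
      have := ih _ _ hm' hx'
      have hce : (x.erase a).card = x.card - 1 := Finset.card_erase_of_mem ha
      omega

lemma triangle_links {G : FGraph V} (hG : IsManifold 3 G) {a b c : V}
    (hab : G.Adj a b) (hac : G.Adj a c) (hbc : G.Adj b c) :
    ∃ p q, p ≠ q ∧ (∀ w, (G.Adj a w ∧ G.Adj b w ∧ G.Adj c w) ↔ (w = p ∨ w = q)) ∧
      ¬ G.Adj p q := by
  have haV : a ∈ G.verts := G.mem_of_adj hab
  have hbV : b ∈ G.verts := G.mem_of_adj (G.symm hab)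
  have hcV : c ∈ G.verts := G.mem_of_adj (G.symm hac)
  set S1 := G.unitSphere a with hS1
  have hs1 : IsSphere 2 S1 := by
    have := (isManifold_elim hG).2 a haV
    norm_num at this; exact this
  have hm1 : IsManifold 2 S1 := isSphere_isManifold hs1 (by norm_num)
  have hbS1 : b ∈ S1.verts := mem_unitSphere_verts.mpr ⟨hbV, hab⟩
  set S2 := S1.unitSphere b with hS2
  have hs2 : IsSphere 1 S2 := by
    have := (isManifold_elim hm1).2 b hbS1
    norm_num at this; exact this
  have hm2 : IsManifold 1 S2 := isSphere_isManifold hs2 (by norm_num)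
  have hcS2 : c ∈ S2.verts := by
    refine mem_unitSphere_verts.mpr ⟨mem_unitSphere_verts.mpr ⟨hcV, hac⟩, ?_⟩
    exact ⟨hbc, hab, hac⟩
  set S3 := S2.unitSphere c with hS3
  have hs3 : IsSphere 0 S3 := by
    have := (isManifold_elim hm2).2 c hcS2
    norm_num at this; exact this
  obtain ⟨p, q, hpq, hverts, hnoadj⟩ := sphere_zero_struct hs3
  have hmem : ∀ w, w ∈ S3.verts ↔ (G.Adj a w ∧ G.Adj b w ∧ G.Adj c w) := by
    intro w
    constructor
    · intro hw
      obtain ⟨hw2, hcw⟩ := mem_unitSphere_verts.mp hw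
      obtain ⟨hw1, hbw⟩ := mem_unitSphere_verts.mp hw2
      obtain ⟨hwV, haw⟩ := mem_unitSphere_verts.mp hw1
      exact ⟨haw, hbw.1, hcw.1.1⟩
    · rintro ⟨haw, hbw, hcw⟩
      have hwV : w ∈ G.verts := G.mem_of_adj (G.symm haw)
      refine mem_unitSphere_verts.mpr ⟨mem_unitSphere_verts.mpr
        ⟨mem_unitSphere_verts.mpr ⟨hwV, haw⟩, hbw, hab, haw⟩, ?_⟩
      exact ⟨⟨hcw, hac, haw⟩, ⟨hbc, hab, hac⟩, ⟨hbw, hab, haw⟩⟩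
  refine ⟨p, q, hpq, ?_, ?_⟩
  · intro w
    rw [← hmem w, hverts]
    simp
  · intro hGpq
    have hpS3 : p ∈ S3.verts := by rw [hverts]; simp
    have hqS3 : q ∈ S3.verts := by rw [hverts]; simp
    have hp3 := (hmem p).mp hpS3
    have hq3 := (hmem q).mp hqS3
    refine hnoadj p q ?_
    refine ⟨⟨⟨hGpq, hp3.1, hq3.1⟩, ?_, ?_⟩, ?_, ?_⟩
    · exact ⟨hp3.2.1, hab, hp3.1⟩
    · exact ⟨hq3.2.1, hab, hq3.1⟩
    · exact ⟨⟨hp3.2.2, hac, hp3.1⟩, ⟨hbc, hab, hac⟩, ⟨hp3.2.1, hab, hp3.1⟩⟩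
    · exact ⟨⟨hq3.2.2, hac, hq3.1⟩, ⟨hbc, hab, hac⟩, ⟨hq3.2.1, hab, hq3.1⟩⟩

end FGraph
noncomputable section LevelSetStruct

namespace FGraph

variable {V : Type}

/-- Boolean sign data of a complex number. -/
noncomputable def bsgn (z : ℂ) : Bool × Bool := (decide (0 < z.re), decide (0 < z.im))

/-- Embedding of boolean sign data back into `ℂ`. -/
def iota : Bool × Bool → ℂ := fun p => ⟨if p.1 then 1 else -1, if p.2 then 1 else -1⟩

lemma iota_inj : Function.Injective iota := by
  rintro ⟨p1, p2⟩ ⟨q1, q2⟩ h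
  have hre : (iota (p1, p2)).re = (iota (q1, q2)).re := by rw [h]
  have him : (iota (p1, p2)).im = (iota (q1, q2)).im := by rw [h]
  simp only [iota] at hre him
  clear h
  cases p1 <;> cases q1 <;> cases p2 <;> cases q2 <;>
    first | rfl | (exfalso; revert hre him; norm_num)

lemma iota_ft : iota (false, true) = -1 + Complex.I := by
  apply Complex.ext <;> simp [iota]

lemma iota_tf : iota (true, false) = 1 - Complex.I := by
  apply Complex.ext <;> simp [iota]

lemma csgn_eq_iota {z : ℂ} (h1 : z.re ≠ 0) (h2 : z.im ≠ 0) : csgn z = iota (bsgn z) := by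
  rcases h1.lt_or_gt with hr | hr <;> rcases h2.lt_or_gt with hi | hi <;>
  · have b1 : bsgn z = (decide (0 < z.re), decide (0 < z.im)) := rfl
    rw [b1]
    apply Complex.ext <;>
      simp [csgn, iota, Real.sign_of_neg, Real.sign_of_pos, hr, hi,
        not_lt.mpr hr.le, not_lt.mpr hi.le, le_of_lt]

/-- The combinatorial condition on boolean sign data. -/
def condB (S : Finset (Bool × Bool)) : Prop :=
  3 ≤ S.card ∧ (false, true) ∈ S ∧ (true, false) ∈ S

instance : DecidablePred condB := fun S => by unfold condB; infer_instance

lemma keyD : ∀ ta tb tc td : Bool × Bool, condB {ta, tb, tc, td} →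
    (condB {tb,tc,td} ∧ condB {ta,tc,td} ∧ ¬condB {ta,tb,td} ∧ ¬condB {ta,tb,tc}) ∨
    (condB {tb,tc,td} ∧ ¬condB {ta,tc,td} ∧ condB {ta,tb,td} ∧ ¬condB {ta,tb,tc}) ∨
    (condB {tb,tc,td} ∧ ¬condB {ta,tc,td} ∧ ¬condB {ta,tb,td} ∧ condB {ta,tb,tc}) ∨
    (¬condB {tb,tc,td} ∧ condB {ta,tc,td} ∧ condB {ta,tb,td} ∧ ¬condB {ta,tb,tc}) ∨
    (¬condB {tb,tc,td} ∧ condB {ta,tc,td} ∧ ¬condB {ta,tb,td} ∧ condB {ta,tb,tc}) ∨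
    (¬condB {tb,tc,td} ∧ ¬condB {ta,tc,td} ∧ condB {ta,tb,td} ∧ condB {ta,tb,tc}) := by
  rintro ⟨a1,a2⟩ ⟨b1,b2⟩ ⟨c1,c2⟩ ⟨d1,d2⟩
  cases a1 <;> cases a2 <;> cases b1 <;> cases b2 <;> cases c1 <;> cases c2 <;>
    cases d1 <;> cases d2 <;> decide

/-- The sign condition defining the complex level set. -/
def condC (ψ : V → ℂ) (x : Finset V) : Prop :=
  3 ≤ (signValues ψ 0 x).card ∧ (-1 + Complex.I) ∈ signValues ψ 0 x ∧
    (1 - Complex.I) ∈ signValues ψ 0 x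

lemma mem_levelSet_verts {G : FGraph V} {ψ : V → ℂ} {x : Finset V} :
    x ∈ (G.complexLevelSet ψ 0).verts ↔ G.IsSimplex x ∧ condC ψ x := by
  simp only [complexLevelSet, induce, barycentric, Finset.mem_filter, Finset.mem_powerset,
    condC]
  constructor
  · rintro ⟨⟨hsub, hs⟩, hc⟩; exact ⟨hs, hc⟩
  · rintro ⟨hs, hc⟩; exact ⟨⟨hs.2.1, hs⟩, hc⟩

lemma levelSet_adj {G : FGraph V} {ψ : V → ℂ} {x y : Finset V} :
    (G.complexLevelSet ψ 0).Adj x y ↔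
      (G.IsSimplex x ∧ G.IsSimplex y ∧ (x ⊂ y ∨ y ⊂ x)) ∧ condC ψ x ∧ condC ψ y :=
  Iff.rfl

lemma signValues_eq (ψ : V → ℂ) (x : Finset V) :
    signValues ψ 0 x = x.image (fun v => csgn (ψ v)) := by
  simp [signValues]

lemma condC_mono {ψ : V → ℂ} {x y : Finset V} (hxy : x ⊆ y) (h : condC ψ x) :
    condC ψ y := by
  obtain ⟨h1, h2, h3⟩ := h
  have hsub : signValues ψ 0 x ⊆ signValues ψ 0 y := by
    rw [signValues_eq, signValues_eq]; exact Finset.image_subset_image hxy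
  exact ⟨le_trans h1 (Finset.card_le_card hsub), hsub h2, hsub h3⟩

lemma condC_card {ψ : V → ℂ} {x : Finset V} (h : condC ψ x) : 3 ≤ x.card :=
  le_trans h.1 (by rw [signValues_eq]; exact Finset.card_image_le)

lemma condC_iff_condB {G : FGraph V} {ψ : V → ℂ}
    (hψ : ∀ v ∈ G.verts, (ψ v).re ≠ 0 ∧ (ψ v).im ≠ 0)
    {x : Finset V} (hsub : x ⊆ G.verts) :
    condC ψ x ↔ condB (x.image (fun v => bsgn (ψ v))) := by
  have himg : signValues ψ 0 x = (x.image (fun v => bsgn (ψ v))).image iota := by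
    rw [signValues_eq, Finset.image_image]
    apply Finset.image_congr
    intro v hv
    exact csgn_eq_iota (hψ v (hsub hv)).1 (hψ v (hsub hv)).2
  have hmem : ∀ (p : Bool × Bool) (S : Finset (Bool × Bool)),
      iota p ∈ S.image iota ↔ p ∈ S := by
    intro p S
    constructor
    · intro h
      obtain ⟨q, hq, hqe⟩ := Finset.mem_image.mp h
      exact (iota_inj hqe) ▸ hq
    · exact Finset.mem_image_of_mem _
  rw [condC, condB, himg, Finset.card_image_of_injective _ iota_inj,
    ← iota_ft, ← iota_tf, hmem, hmem]

lemma simplex_insert {G : FGraph V} {x : Finset V} (hx : G.IsSimplex x) {p : V}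
    (hpV : p ∈ G.verts) (hadj : ∀ u ∈ x, G.Adj u p) : G.IsSimplex (insert p x) := by
  refine ⟨⟨p, Finset.mem_insert_self p x⟩, ?_, ?_⟩
  · exact Finset.insert_subset_iff.mpr ⟨hpV, hx.2.1⟩
  · intro u hu w hw huw
    rcases Finset.mem_insert.mp hu with rfl | hu' <;>
      rcases Finset.mem_insert.mp hw with rfl | hw'
    · exact absurd rfl huw
    · exact G.symm (hadj w hw')
    · exact hadj u hu'
    · exact hx.2.2 u hu' w hw' huw

lemma simplex_subset {G : FGraph V} {x y : Finset V} (hx : G.IsSimplex x)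
    (hy : y ⊆ x) (hne : y.Nonempty) : G.IsSimplex y :=
  ⟨hne, subset_trans hy hx.2.1,
    fun a ha b hb hab => hx.2.2 a (hy ha) b (hy hb) hab⟩

lemma levelSet_no_triangle {G : FGraph V} (hG : IsManifold 3 G) {ψ : V → ℂ} :
    ∀ x y z, (G.complexLevelSet ψ 0).Adj x y → (G.complexLevelSet ψ 0).Adj y z →
      (G.complexLevelSet ψ 0).Adj x z → False := by
  intro x y z hxy hyz hxz
  rw [levelSet_adj] at hxy hyz hxz
  have hm : IsManifold ((3 : ℕ) : ℤ) G := by exact_mod_cast hG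
  have cx : 3 ≤ x.card ∧ x.card ≤ 4 :=
    ⟨condC_card hxy.2.1, simplex_card_le 3 G x hm hxy.1.1⟩
  have cy : 3 ≤ y.card ∧ y.card ≤ 4 :=
    ⟨condC_card hxy.2.2, simplex_card_le 3 G y hm hxy.1.2.1⟩
  have cz : 3 ≤ z.card ∧ z.card ≤ 4 :=
    ⟨condC_card hxz.2.2, simplex_card_le 3 G z hm hxz.1.2.1⟩
  have d1 : x.card ≠ y.card := by
    rcases hxy.1.2.2 with h | h <;>
      [exact Nat.ne_of_lt (Finset.card_lt_card h);
       exact (Nat.ne_of_lt (Finset.card_lt_card h)).symm]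
  have d2 : y.card ≠ z.card := by
    rcases hyz.1.2.2 with h | h <;>
      [exact Nat.ne_of_lt (Finset.card_lt_card h);
       exact (Nat.ne_of_lt (Finset.card_lt_card h)).symm]
  have d3 : x.card ≠ z.card := by
    rcases hxz.1.2.2 with h | h <;>
      [exact Nat.ne_of_lt (Finset.card_lt_card h);
       exact (Nat.ne_of_lt (Finset.card_lt_card h)).symm]
  omega

lemma tetra_finish {G : FGraph V} (hG : IsManifold 3 G) {ψ : V → ℂ} {x : Finset V}
    (hs : G.IsSimplex x) (hc : condC ψ x) (hcard : x.card = 4)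
    {v1 v2 : V} (h1 : v1 ∈ x) (h2 : v2 ∈ x) (h12 : v1 ≠ v2)
    (hc1 : condC ψ (x.erase v1)) (hc2 : condC ψ (x.erase v2))
    (huniq : ∀ v ∈ x, condC ψ (x.erase v) → v = v1 ∨ v = v2) :
    ∃ y z, y ≠ z ∧ (G.complexLevelSet ψ 0).Adj x y ∧ (G.complexLevelSet ψ 0).Adj x z ∧
      ∀ w, (G.complexLevelSet ψ 0).Adj x w → w = y ∨ w = z := by
  have hm : IsManifold ((3 : ℕ) : ℤ) G := by exact_mod_cast hG
  have hAdj : ∀ v ∈ x, condC ψ (x.erase v) → (G.complexLevelSet ψ 0).Adj x (x.erase v) := by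
    intro v hv hcv
    rw [levelSet_adj]
    refine ⟨⟨hs, ?_, Or.inr (Finset.erase_ssubset hv)⟩, hc, hcv⟩
    refine simplex_subset hs (Finset.erase_subset _ _) ?_
    rw [← Finset.card_pos, Finset.card_erase_of_mem hv]
    omega
  refine ⟨x.erase v1, x.erase v2, ?_, hAdj v1 h1 hc1, hAdj v2 h2 hc2, ?_⟩
  · intro he
    have : v2 ∈ x.erase v1 := Finset.mem_erase.mpr ⟨Ne.symm h12, h2⟩
    rw [he] at this
    exact Finset.notMem_erase v2 x this
  · intro w hw
    rw [levelSet_adj] at hw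
    rcases hw.1.2.2 with hss | hss
    · exfalso
      have h5 : 4 < w.card := hcard ▸ Finset.card_lt_card hss
      have := simplex_card_le 3 G w hm hw.1.2.1
      omega
    · have hw3 : w.card = 3 := by
        have := condC_card hw.2.2
        have := Finset.card_lt_card hss
        omega
      have hsd : (x \ w).card = 1 := by
        rw [Finset.card_sdiff_of_subset hss.subset]; omega
      obtain ⟨v, hv⟩ := Finset.card_eq_one.mp hsd
      have hvx : v ∈ x ∧ v ∉ w := by
        have : v ∈ x \ w := hv ▸ Finset.mem_singleton_self v
        exact Finset.mem_sdiff.mp this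
      have hwe : w = x.erase v := by
        rw [Finset.erase_eq, ← hv, Finset.sdiff_sdiff_self_left,
          Finset.inter_eq_right.mpr hss.subset]
      rcases huniq v hvx.1 (hwe ▸ hw.2.2) with rfl | rfl
      · exact Or.inl hwe
      · exact Or.inr hwe

end FGraph

end LevelSetStruct
noncomputable section DegreePart

namespace FGraph

variable {V : Type}

lemma levelSet_two_neighbors {G : FGraph V} (hG : IsManifold 3 G) {ψ : V → ℂ}
    (hψ : ∀ v ∈ G.verts, (ψ v).re ≠ 0 ∧ (ψ v).im ≠ 0)
    {x : Finset V} (hx : x ∈ (G.complexLevelSet ψ 0).verts) :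
    ∃ y z, y ≠ z ∧ (G.complexLevelSet ψ 0).Adj x y ∧ (G.complexLevelSet ψ 0).Adj x z ∧
      ∀ w, (G.complexLevelSet ψ 0).Adj x w → w = y ∨ w = z := by
  obtain ⟨hs, hc⟩ := mem_levelSet_verts.mp hx
  have hm : IsManifold ((3 : ℕ) : ℤ) G := by exact_mod_cast hG
  have hub := simplex_card_le 3 G x hm hs
  have hlb := condC_card hc
  have hcase : x.card = 3 ∨ x.card = 4 := by omega
  rcases hcase with h3 | h4
  · -- triangle case
    obtain ⟨a, b, c, hab', hac', hbc', hxeq⟩ := Finset.card_eq_three.mp h3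
    have haM : a ∈ x := by rw [hxeq]; simp
    have hbM : b ∈ x := by rw [hxeq]; simp
    have hcM : c ∈ x := by rw [hxeq]; simp
    have hAB : G.Adj a b := hs.2.2 a haM b hbM hab'
    have hAC : G.Adj a c := hs.2.2 a haM c hcM hac'
    have hBC : G.Adj b c := hs.2.2 b hbM c hcM hbc'
    obtain ⟨p, q, hpq, hiff, hnadj⟩ := triangle_links hG hAB hAC hBC
    have hp3 := (hiff p).mpr (Or.inl rfl)
    have hq3 := (hiff q).mpr (Or.inr rfl)
    have hpV : p ∈ G.verts := G.mem_of_adj (G.symm hp3.1)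
    have hqV : q ∈ G.verts := G.mem_of_adj (G.symm hq3.1)
    have hadjx : ∀ r, (G.Adj a r ∧ G.Adj b r ∧ G.Adj c r) → ∀ u ∈ x, G.Adj u r := by
      intro r hr u hu
      rw [hxeq] at hu
      rcases Finset.mem_insert.mp hu with rfl | hu'
      · exact hr.1
      · rcases Finset.mem_insert.mp hu' with rfl | hu''
        · exact hr.2.1
        · rw [Finset.mem_singleton.mp hu'']; exact hr.2.2
    have hnx : ∀ r, (G.Adj a r ∧ G.Adj b r ∧ G.Adj c r) → r ∉ x := by
      intro r hr hrx
      exact G.loopless r (G.symm (hadjx r hr r hrx))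
    have hAdjy : ∀ r, (G.Adj a r ∧ G.Adj b r ∧ G.Adj c r) → r ∈ G.verts →
        (G.complexLevelSet ψ 0).Adj x (insert r x) := by
      intro r hr hrV
      rw [levelSet_adj]
      exact ⟨⟨hs, simplex_insert hs hrV (hadjx r hr), Or.inl (Finset.ssubset_insert (hnx r hr))⟩,
        hc, condC_mono (Finset.subset_insert r x) hc⟩
    refine ⟨insert p x, insert q x, ?_, hAdjy p hp3 hpV, hAdjy q hq3 hqV, ?_⟩
    · intro he
      have hpmem : p ∈ insert q x := he ▸ Finset.mem_insert_self p x
      rcases Finset.mem_insert.mp hpmem with h | h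
      · exact hpq h
      · exact hnx p hp3 h
    · intro w hw
      rw [levelSet_adj] at hw
      rcases hw.1.2.2 with hss | hss
      · have hwcard := simplex_card_le 3 G w hm hw.1.2.1
        have hlt := Finset.card_lt_card hss
        have hw4 : w.card = 4 := by omega
        have hsd : (w \ x).card = 1 := by rw [Finset.card_sdiff_of_subset hss.subset]; omega
        obtain ⟨d, hd⟩ := Finset.card_eq_one.mp hsd
        have hdw : d ∈ w ∧ d ∉ x := Finset.mem_sdiff.mp (hd ▸ Finset.mem_singleton_self d)
        have hweq : w = insert d x := by
          rw [Finset.insert_eq, ← hd, Finset.union_comm, Finset.union_sdiff_of_subset hss.subset]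
        have hdadj : G.Adj a d ∧ G.Adj b d ∧ G.Adj c d := by
          refine ⟨hw.1.2.1.2.2 a (hss.subset haM) d hdw.1 ?_,
            hw.1.2.1.2.2 b (hss.subset hbM) d hdw.1 ?_,
            hw.1.2.1.2.2 c (hss.subset hcM) d hdw.1 ?_⟩ <;>
            exact fun h => hdw.2 (h ▸ ‹_ ∈ x›)
        rcases (hiff d).mp hdadj with rfl | rfl
        · exact Or.inl hweq
        · exact Or.inr hweq
      · exfalso
        have := condC_card hw.2.2
        have := Finset.card_lt_card hss
        omega
  · -- tetrahedron case
    set τ : V → Bool × Bool := fun v => bsgn (ψ v) with hτ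
    obtain ⟨a, haM⟩ := hs.1
    have he3 : (x.erase a).card = 3 := by rw [Finset.card_erase_of_mem haM]; omega
    obtain ⟨b, c, d, hbc', hbd', hcd', hEa⟩ := Finset.card_eq_three.mp he3
    have hxeq : x = insert a {b, c, d} := by rw [← hEa, Finset.insert_erase haM]
    have hna : a ∉ ({b, c, d} : Finset V) := by rw [← hEa]; exact Finset.notMem_erase a x
    have hab' : a ≠ b := by intro h; exact hna (by rw [h]; simp)
    have hac' : a ≠ c := by intro h; exact hna (by rw [h]; simp)
    have had' : a ≠ d := by intro h; exact hna (by rw [h]; simp)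
    have hbM : b ∈ x := by rw [hxeq]; simp
    have hcM : c ∈ x := by rw [hxeq]; simp
    have hdM : d ∈ x := by rw [hxeq]; simp
    have hEb : x.erase b = {a, c, d} := by
      rw [hxeq, Finset.erase_insert_of_ne hab',
        Finset.erase_insert (by simp [hbc', hbd'])]
    have hEc : x.erase c = {a, b, d} := by
      rw [hxeq, Finset.erase_insert_of_ne hac', Finset.erase_insert_of_ne hbc',
        Finset.erase_insert (by simp [hcd'])]
    have hEd : x.erase d = {a, b, c} := by
      rw [hxeq, Finset.erase_insert_of_ne had', Finset.erase_insert_of_ne hbd',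
        Finset.erase_insert_of_ne hcd', Finset.erase_singleton]
      simp
    have himg3 : ∀ u v w : V, ({u, v, w} : Finset V).image τ = {τ u, τ v, τ w} := by
      intro u v w; simp
    have hsubx : x ⊆ G.verts := hs.2.1
    have hsuba : ({b, c, d} : Finset V) ⊆ G.verts := by
      rw [← hEa]; exact subset_trans (Finset.erase_subset _ _) hsubx
    have hsubb : ({a, c, d} : Finset V) ⊆ G.verts := by
      rw [← hEb]; exact subset_trans (Finset.erase_subset _ _) hsubx
    have hsubc : ({a, b, d} : Finset V) ⊆ G.verts := by
      rw [← hEc]; exact subset_trans (Finset.erase_subset _ _) hsubx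
    have hsubd : ({a, b, c} : Finset V) ⊆ G.verts := by
      rw [← hEd]; exact subset_trans (Finset.erase_subset _ _) hsubx
    have hqa : condC ψ (x.erase a) ↔ condB {τ b, τ c, τ d} := by
      rw [hEa, condC_iff_condB hψ hsuba, himg3]
    have hqb : condC ψ (x.erase b) ↔ condB {τ a, τ c, τ d} := by
      rw [hEb, condC_iff_condB hψ hsubb, himg3]
    have hqc : condC ψ (x.erase c) ↔ condB {τ a, τ b, τ d} := by
      rw [hEc, condC_iff_condB hψ hsubc, himg3]
    have hqd : condC ψ (x.erase d) ↔ condB {τ a, τ b, τ c} := by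
      rw [hEd, condC_iff_condB hψ hsubd, himg3]
    have himx : x.image τ = {τ a, τ b, τ c, τ d} := by rw [hxeq]; simp
    have hCx : condB {τ a, τ b, τ c, τ d} := by
      rw [← himx]; exact (condC_iff_condB hψ hsubx).mp hc
    have huniq0 : ∀ v ∈ x, v = a ∨ v = b ∨ v = c ∨ v = d := by
      intro v hv
      rw [hxeq] at hv
      simpa using hv
    rcases keyD (τ a) (τ b) (τ c) (τ d) hCx with
      ⟨k1, k2, k3, k4⟩ | ⟨k1, k2, k3, k4⟩ | ⟨k1, k2, k3, k4⟩ |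
      ⟨k1, k2, k3, k4⟩ | ⟨k1, k2, k3, k4⟩ | ⟨k1, k2, k3, k4⟩
    · refine tetra_finish hG hs hc h4 haM hbM hab' (hqa.mpr k1) (hqb.mpr k2) ?_
      intro v hv hcv
      rcases huniq0 v hv with rfl | rfl | rfl | rfl
      · exact Or.inl rfl
      · exact Or.inr rfl
      · exact absurd (hqc.mp hcv) k3
      · exact absurd (hqd.mp hcv) k4
    · refine tetra_finish hG hs hc h4 haM hcM hac' (hqa.mpr k1) (hqc.mpr k3) ?_
      intro v hv hcv
      rcases huniq0 v hv with rfl | rfl | rfl | rfl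
      · exact Or.inl rfl
      · exact absurd (hqb.mp hcv) k2
      · exact Or.inr rfl
      · exact absurd (hqd.mp hcv) k4
    · refine tetra_finish hG hs hc h4 haM hdM had' (hqa.mpr k1) (hqd.mpr k4) ?_
      intro v hv hcv
      rcases huniq0 v hv with rfl | rfl | rfl | rfl
      · exact Or.inl rfl
      · exact absurd (hqb.mp hcv) k2
      · exact absurd (hqc.mp hcv) k3
      · exact Or.inr rfl
    · refine tetra_finish hG hs hc h4 hbM hcM hbc' (hqb.mpr k2) (hqc.mpr k3) ?_
      intro v hv hcv
      rcases huniq0 v hv with rfl | rfl | rfl | rfl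
      · exact absurd (hqa.mp hcv) k1
      · exact Or.inl rfl
      · exact Or.inr rfl
      · exact absurd (hqd.mp hcv) k4
    · refine tetra_finish hG hs hc h4 hbM hdM hbd' (hqb.mpr k2) (hqd.mpr k4) ?_
      intro v hv hcv
      rcases huniq0 v hv with rfl | rfl | rfl | rfl
      · exact absurd (hqa.mp hcv) k1
      · exact Or.inl rfl
      · exact absurd (hqc.mp hcv) k3
      · exact Or.inr rfl
    · refine tetra_finish hG hs hc h4 hcM hdM hcd' (hqc.mpr k3) (hqd.mpr k4) ?_
      intro v hv hcv
      rcases huniq0 v hv with rfl | rfl | rfl | rfl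
      · exact absurd (hqa.mp hcv) k1
      · exact absurd (hqb.mp hcv) k2
      · exact Or.inl rfl
      · exact Or.inr rfl

end FGraph

end DegreePart
noncomputable section Decomp

namespace FGraph

variable {W : Type}

/-- Next vertex of a walk: the neighbour of `c` other than `p`. -/
noncomputable def nxtF (Y Z : W → W) (p c : W) : W := if p = Y c then Z c else Y c

/-- The walk through a 2-regular graph, as pairs of consecutive vertices. -/
noncomputable def walkF (Y Z : W → W) (v : W) : ℕ → W × W
  | 0 => (v, Y v)
  | (k+1) => ((walkF Y Z v k).2, nxtF Y Z (walkF Y Z v k).1 (walkF Y Z v k).2)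

lemma cycle_component (H : FGraph W)
    (hdeg : ∀ v ∈ H.verts, ∃ y z, y ≠ z ∧ H.Adj v y ∧ H.Adj v z ∧
      ∀ w, H.Adj v w → w = y ∨ w = z)
    (htri : ∀ a b c, H.Adj a b → H.Adj b c → H.Adj a c → False)
    (v : W) (hv : v ∈ H.verts) :
    ∃ C : Finset W, v ∈ C ∧ C ⊆ H.verts ∧ (∀ a ∈ C, ∀ b, H.Adj a b → b ∈ C) ∧
      (∀ w ∈ C, ∀ S : Finset W, (∀ a ∈ S, ∀ b, H.Adj a b → b ∈ S) → w ∈ S → C ⊆ S) ∧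
      ∃ nn, 4 ≤ nn ∧ Iso (H.induce (· ∈ C)) (cycleGraph nn) := by
  classical
  choose! Y Z hYZ hAY hAZ hU using hdeg
  set f : ℕ → W := fun k => (walkF Y Z v k).1 with hfdef
  have hstep : ∀ k, walkF Y Z v (k+1) =
      ((walkF Y Z v k).2, nxtF Y Z (walkF Y Z v k).1 (walkF Y Z v k).2) := fun k => rfl
  have hf0 : f 0 = v := rfl
  have hfs : ∀ k, f (k+1) = (walkF Y Z v k).2 := fun k => by
    show (walkF Y Z v (k+1)).1 = _; rw [hstep]
  have hf1 : f 1 = Y v := by rw [hfs 0]; rfl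
  have hfstep : ∀ k, f (k+2) = nxtF Y Z (f k) (f (k+1)) := by
    intro k
    rw [hfs (k+1), hstep k]
    show nxtF Y Z (walkF Y Z v k).1 (walkF Y Z v k).2 = _
    rw [← hfs k]
  have nxt_spec : ∀ p c, c ∈ H.verts → H.Adj c (nxtF Y Z p c) ∧ nxtF Y Z p c ≠ p := by
    intro p c hc
    unfold nxtF
    split
    · exact ⟨hAZ c hc, fun h => hYZ c hc (by rw [← ‹p = Y c›, h])⟩
    · exact ⟨hAY c hc, fun h => ‹¬ p = Y c› h.symm⟩
  have walk_adj : ∀ k, H.Adj (f k) (f (k+1)) := by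
    intro k
    induction k with
    | zero => rw [hf0, hf1]; exact hAY v hv
    | succ k ih =>
      have hc : f (k+1) ∈ H.verts := H.mem_of_adj (H.symm ih)
      rw [hfstep k]
      exact (nxt_spec (f k) (f (k+1)) hc).1
  have walk_mem : ∀ k, f k ∈ H.verts := fun k => H.mem_of_adj (walk_adj k)
  have walk_ne2 : ∀ k, f (k+2) ≠ f k := by
    intro k
    rw [hfstep k]
    exact (nxt_spec (f k) (f (k+1)) (walk_mem (k+1))).2
  have walk_nbr : ∀ k w, H.Adj (f (k+1)) w → w = f k ∨ w = f (k+2) := by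
    intro k w h
    have hc : f (k+1) ∈ H.verts := walk_mem (k+1)
    have h1 : f k = Y (f (k+1)) ∨ f k = Z (f (k+1)) := hU _ hc _ (H.symm (walk_adj k))
    have h2 : f (k+2) = Y (f (k+1)) ∨ f (k+2) = Z (f (k+1)) := by
      rw [hfstep k]
      unfold nxtF
      split
      · exact Or.inr rfl
      · exact Or.inl rfl
    have h3 := walk_ne2 k
    rcases hU _ hc w h with rfl | rfl
    · rcases h1 with e1 | e1
      · exact Or.inl e1.symm
      · rcases h2 with e2 | e2
        · exact Or.inr e2.symm
        · exact absurd (e2.trans e1.symm) h3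
    · rcases h1 with e1 | e1
      · rcases h2 with e2 | e2
        · exact absurd (e2.trans e1.symm) h3
        · exact Or.inr e2.symm
      · exact Or.inl e1.symm
  have walk_fd : ∀ i j, f i = f j → f (i+1) = f (j+1) → ∀ t, f (i+t) = f (j+t) := by
    intro i j h0 h1 t
    have key : ∀ t, f (i+t) = f (j+t) ∧ f (i+t+1) = f (j+t+1) := by
      intro t
      induction t with
      | zero => exact ⟨h0, h1⟩
      | succ t ih =>
        exact ⟨ih.2, by rw [show i+(t+1)+1 = (i+t)+2 from rfl, show j+(t+1)+1 = (j+t)+2 from rfl,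
          hfstep (i+t), hfstep (j+t), ih.1, ih.2]⟩
    exact (key t).1
  have walk_bd : ∀ i j, f (i+1) = f (j+1) → f (i+2) = f (j+2) → f i = f j := by
    intro i j h1 h2
    have hadj : H.Adj (f (j+1)) (f i) := by
      rw [← h1]; exact H.symm (walk_adj i)
    rcases walk_nbr j (f i) hadj with e | e
    · exact e
    · exact absurd (by rw [h2, ← e]) (walk_ne2 i)
  have pair_to_per : ∀ q i, f i = f (i + (q+1)) → f (i+1) = f (i + (q+1) + 1) →
      f 0 = f (q+1) := by
    intro q i
    induction i with
    | zero =>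
      intro a _
      rw [Nat.zero_add] at a
      exact a
    | succ i ih =>
      intro a b
      have a' : f (i+1) = f ((i + (q+1)) + 1) := by
        rw [show (i+(q+1))+1 = (i+1)+(q+1) from by omega]; exact a
      have b' : f (i+2) = f ((i + (q+1)) + 2) := by
        rw [show (i+(q+1))+2 = (i+1)+(q+1)+1 from by omega]; exact b
      exact ih (walk_bd i (i + (q+1)) a' b') a'
  have hex : ∃ t, 0 < t ∧ f t = f 0 := by
    have hmaps : ∀ k ∈ Finset.range ((H.verts ×ˢ H.verts).card + 1),
        (f k, f (k+1)) ∈ H.verts ×ˢ H.verts := by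
      intro k _
      exact Finset.mem_product.mpr ⟨walk_mem k, walk_mem (k+1)⟩
    have hcard : (H.verts ×ˢ H.verts).card <
        (Finset.range ((H.verts ×ˢ H.verts).card + 1)).card := by
      rw [Finset.card_range]; omega
    obtain ⟨i, _, j, _, hij, heq⟩ :=
      Finset.exists_ne_map_eq_of_card_lt_of_maps_to hcard hmaps
    have heq1 : f i = f j := congrArg Prod.fst heq
    have heq2 : f (i+1) = f (j+1) := congrArg Prod.snd heq
    have main : ∀ i j : ℕ, i < j → f i = f j → f (i+1) = f (j+1) →
        ∃ t, 0 < t ∧ f t = f 0 := by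
      intro i j hlt e1 e2
      obtain ⟨q, hq⟩ := Nat.exists_eq_add_of_lt hlt
      refine ⟨q+1, by omega, ?_⟩
      refine (pair_to_per q i ?_ ?_).symm
      · rw [show i + (q+1) = j from by omega]; exact e1
      · rw [show i + (q+1) + 1 = j + 1 from by omega]; exact e2
    rcases Nat.lt_or_ge i j with hlt | hge
    · exact main i j hlt heq1 heq2
    · exact main j i (by omega) heq1.symm heq2.symm
  set n := Nat.find hex with hndef
  obtain ⟨hn_pos, hn_eq⟩ : 0 < n ∧ f n = f 0 := Nat.find_spec hex
  have hn_min : ∀ m, 0 < m → f m = f 0 → n ≤ m := by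
    intro m h1 h2
    by_contra hcon
    exact Nat.find_min hex (by omega) ⟨h1, h2⟩
  have hn3 : 3 ≤ n := by
    rcases (by omega : n = 1 ∨ n = 2 ∨ 3 ≤ n) with h | h | h
    · exfalso
      have ha := walk_adj 0
      rw [show (0:ℕ)+1 = n from by omega, hn_eq] at ha
      exact H.loopless (f 0) ha
    · exfalso
      have := walk_ne2 0
      rw [show (0:ℕ)+2 = n from by omega] at this
      exact this hn_eq
    · exact h
  have hinj : ∀ i j, i < n → j < n → f i = f j → i = j := by
    suffices hlt : ∀ i j, i < j → j < n → f i ≠ f j by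
      intro i j hi hj he
      rcases Nat.lt_trichotomy i j with h | h | h
      · exact absurd he (hlt i j h hj)
      · exact h
      · exact absurd he.symm (hlt j i h hi)
    intro i j hij hj he
    rcases Nat.eq_zero_or_pos i with rfl | hipos
    · exact absurd he.symm (by intro hh; have := hn_min j (by omega) hh; omega)
    obtain ⟨i', rfl⟩ : ∃ i', i = i' + 1 := ⟨i - 1, by omega⟩
    obtain ⟨j', rfl⟩ : ∃ j', j = j' + 1 := ⟨j - 1, by omega⟩
    have hAdj : H.Adj (f (i'+1)) (f (j'+2)) := by
      rw [he]
      exact walk_adj (j'+1)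
    rcases walk_nbr i' _ hAdj with e | e
    · -- reversal case: f (j'+2) = f i'
      have hij' : i' < j' := by omega
      have Rev : ∀ k, i' + k ≤ j' + 1 → f (i' + k) = f (j' + 2 - k) := by
        intro k
        induction k using Nat.strong_induction_on with
        | _ k ih =>
          match k with
          | 0 => intro _; rw [show j' + 2 - 0 = j' + 2 from by omega]; exact e.symm
          | 1 => intro _; rw [show j' + 2 - 1 = j' + 1 from by omega]; exact he
          | (k+2) =>
            intro hk
            have ih0 := ih k (by omega) (by omega)
            have ih1 := ih (k+1) (by omega) (by omega)
            have er2 : j' + 2 - k = (j' - k) + 2 := by omega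
            have er1 : j' + 2 - (k+1) = (j' - k) + 1 := by omega
            rw [er2] at ih0
            rw [er1] at ih1
            have hAdj2 : H.Adj (f ((j' - k) + 1)) (f (i' + k + 2)) := by
              rw [← ih1]
              exact walk_adj (i' + k + 1)
            rcases walk_nbr (j' - k) _ hAdj2 with e' | e'
            · rw [show i' + (k+2) = i' + k + 2 from by omega, e',
                show j' + 2 - (k+2) = j' - k from by omega]
            · exfalso
              exact walk_ne2 (i' + k) (by rw [show i'+k+2 = i'+k+2 from rfl, e', ← ih0])
      set q := j' - i' with hqdef
      have hq1 : 1 ≤ q := by omega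
      rcases Nat.even_or_odd q with ⟨u', hu'⟩ | ⟨u, hu⟩
      · -- q = 2u', u' ≥ 1
        have hu1 : 1 ≤ u' := by omega
        have hR := Rev (u' + 2) (by omega)
        rw [show j' + 2 - (u' + 2) = i' + u' from by omega] at hR
        have hR' : f (i' + u' + 2) = f (i' + u') := hR
        exact walk_ne2 (i' + u') hR'
      · -- q = 2u + 1
        have hR := Rev (u + 1) (by omega)
        rw [show j' + 2 - (u + 1) = i' + u + 2 from by omega] at hR
        have hR' : f (i' + u + 1) = f (i' + u + 2) := hR
        have hadj := walk_adj (i' + u + 1)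
        rw [hR'] at hadj
        exact H.loopless _ hadj
    · -- forward case: f (j'+2) = f (i'+2)
      obtain ⟨q, hq⟩ := Nat.exists_eq_add_of_lt (show i' < j' from by omega)
      have e1 : f (i'+1) = f ((i'+1) + (q+1)) := by
        rw [show (i'+1) + (q+1) = j'+1 from by omega]; exact he
      have e2 : f ((i'+1)+1) = f ((i'+1) + (q+1) + 1) := by
        rw [show (i'+1) + (q+1) + 1 = j'+2 from by omega]; exact e.symm
      have hdz := pair_to_per q (i'+1) e1 e2
      have := hn_min (q+1) (by omega) hdz.symm
      omega
  -- wrap-around structure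
  have hwrap : H.Adj (f (n-1)) (f 0) := by
    have h := walk_adj (n-1)
    rw [show n - 1 + 1 = n from by omega, hn_eq] at h
    exact h
  have hfn1_ne : f (n-1) ≠ f 1 := by
    intro h
    have := hinj (n-1) 1 (by omega) (by omega) h
    omega
  have hnbr0 : ∀ w, H.Adj (f 0) w → w = f 1 ∨ w = f (n-1) := by
    intro w hw
    rw [hf0] at hw
    have hw' := hU v hv w hw
    have hm := hU v hv (f (n-1)) (by rw [← hf0]; exact H.symm hwrap)
    rcases hm with e | e
    · exact absurd (e.trans hf1.symm) hfn1_ne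
    · rcases hw' with rfl | rfl
      · exact Or.inl hf1.symm
      · exact Or.inr e.symm
  have hper1 : f (n+1) = f 1 := by
    have h := walk_adj n
    rw [hn_eq] at h
    rcases hnbr0 _ h with e | e
    · exact e
    · exfalso
      have := walk_ne2 (n-1)
      rw [show n - 1 + 2 = n + 1 from by omega] at this
      exact this (by rw [e])
  have hper : ∀ t, f (t + n) = f t := by
    have h := walk_fd n 0 hn_eq hper1
    intro t
    have h2 := h t
    rw [Nat.zero_add] at h2
    rw [show t + n = n + t from by omega]
    exact h2
  have hperk : ∀ t k, f (t + k * n) = f t := by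
    intro t k
    induction k with
    | zero => simp
    | succ k ih =>
      rw [Nat.succ_mul, ← Nat.add_assoc]
      exact (hper (t + k * n)).trans ih
  have hn4 : 4 ≤ n := by
    rcases (by omega : n = 3 ∨ 4 ≤ n) with h3 | h4
    · exfalso
      have a1 := walk_adj 0
      have a2 := walk_adj 1
      have a3 : H.Adj (f 0) (f 2) := by
        have h := hwrap
        rw [show n - 1 = 2 from by omega] at h
        exact H.symm h
      exact htri _ _ _ a1 a2 a3
    · exact h4
  set C := (Finset.range n).image f with hCdef
  have hvC : v ∈ C := Finset.mem_image.mpr ⟨0, Finset.mem_range.mpr (by omega), hf0⟩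
  have hCsub : C ⊆ H.verts := by
    intro a ha
    obtain ⟨k, _, rfl⟩ := Finset.mem_image.mp ha
    exact walk_mem k
  have hmemC : ∀ k, f k ∈ C := by
    intro k
    have hk : f k = f (k % n) := by
      conv_lhs => rw [show k = k % n + (k / n) * n from by rw [Nat.mod_add_div']]
      exact hperk (k % n) (k / n)
    rw [hk]
    exact Finset.mem_image.mpr ⟨k % n, Finset.mem_range.mpr (Nat.mod_lt _ (by omega)), rfl⟩
  have hCclosed : ∀ a ∈ C, ∀ b, H.Adj a b → b ∈ C := by
    intro a ha b hab
    obtain ⟨k, hk, rfl⟩ := Finset.mem_image.mp ha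
    rcases Nat.eq_zero_or_pos k with rfl | hkpos
    · rcases hnbr0 b hab with rfl | rfl <;> exact hmemC _
    · obtain ⟨k', rfl⟩ : ∃ k', k = k' + 1 := ⟨k - 1, by omega⟩
      rcases walk_nbr k' b hab with rfl | rfl <;> exact hmemC _
  have hCmin : ∀ w ∈ C, ∀ S : Finset W, (∀ a ∈ S, ∀ b, H.Adj a b → b ∈ S) → w ∈ S →
      C ⊆ S := by
    intro w hw S hSc hwS
    obtain ⟨i, hi, rfl⟩ := Finset.mem_image.mp hw
    have hfS : ∀ t, f (i + t) ∈ S := by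
      intro t
      induction t with
      | zero => exact hwS
      | succ t ih => exact hSc _ ih _ (walk_adj (i + t))
    intro a ha
    obtain ⟨k, hk, rfl⟩ := Finset.mem_image.mp ha
    have hin : i ≤ i * n := Nat.le_mul_of_pos_right i (by omega)
    have he : f k = f (i + (k + i * n - i)) := by
      rw [show i + (k + i * n - i) = k + i * n from by omega]
      exact (hperk k i).symm
    rw [he]
    exact hfS _
  -- the isomorphism with the cycle graph
  have hEx : ∀ w ∈ C, ∃ i : Fin n, f i.val = w := by
    intro w hw
    obtain ⟨k, hk, rfl⟩ := Finset.mem_image.mp hw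
    exact ⟨⟨k, Finset.mem_range.mp hk⟩, rfl⟩
  set φ : W → Fin n := fun w => if h : ∃ i : Fin n, f i.val = w then h.choose
    else (⟨0, by omega⟩ : Fin n) with hφdef
  have hfφ : ∀ w, (∃ i : Fin n, f i.val = w) → f (φ w).val = w := by
    intro w h
    rw [hφdef]
    simp only [dif_pos h]
    exact h.choose_spec
  have hφf : ∀ i : Fin n, φ (f i.val) = i := by
    intro i
    have h : ∃ j : Fin n, f j.val = f i.val := ⟨i, rfl⟩
    exact Fin.ext (hinj (φ (f i.val)).val i.val (φ (f i.val)).isLt i.isLt (hfφ _ h))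
  have hvertsEq : (H.induce (· ∈ C)).verts = C := by
    ext a
    simp only [induce, Finset.mem_filter]
    exact ⟨fun h => h.2, fun h => ⟨hCsub h, h⟩⟩
  refine ⟨C, hvC, hCsub, hCclosed, hCmin, n, hn4, φ, ?_, ?_⟩
  · rw [hvertsEq]
    refine ⟨fun a _ => ?_, fun a ha b hb he => ?_, fun s _ => ?_⟩
    · simp [cycleGraph]
    · have h1 := hfφ a (hEx a (Finset.mem_coe.mp ha))
      have h2 := hfφ b (hEx b (Finset.mem_coe.mp hb))
      rw [← h1, ← h2, he]
    · exact ⟨f s.val, Finset.mem_coe.mpr (hmemC s.val), hφf s⟩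
  · intro a ha b hb
    rw [hvertsEq] at ha hb
    have h1 : f (φ a).val = a := hfφ a (hEx a ha)
    have h2 : f (φ b).val = b := hfφ b (hEx b hb)
    constructor
    · intro hadj
      have hAdj : H.Adj (f (φ a).val) (f (φ b).val) := by rw [h1, h2]; exact hadj.1
      refine ⟨?_, ?_⟩
      · intro hij
        apply H.loopless a
        have : a = b := by rw [← h1, ← h2, hij]
        exact this ▸ hadj.1
      · rcases Nat.eq_zero_or_pos (φ a).val with hz | hpos
        · rw [hz] at hAdj
          rcases hnbr0 _ hAdj with e | e
          · left
            have := hinj (φ b).val 1 (φ b).isLt (by omega) e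
            rw [hz, this, Nat.mod_eq_of_lt (by omega : (0:ℕ)+1 < n)]
          · right
            have := hinj (φ b).val (n-1) (φ b).isLt (by omega) e
            rw [hz, this, show n - 1 + 1 = n from by omega, Nat.mod_self]
        · obtain ⟨i', hi'⟩ : ∃ i', (φ a).val = i' + 1 := ⟨(φ a).val - 1, by omega⟩
          rw [hi'] at hAdj
          rcases walk_nbr i' _ hAdj with e | e
          · right
            have := hinj (φ b).val i' (φ b).isLt (by omega) e
            rw [this, hi', Nat.mod_eq_of_lt (by omega : i' + 1 < n)]
          · rcases (by omega : i' + 2 < n ∨ i' + 2 = n) with hlt | heq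
            · left
              have := hinj (φ b).val (i'+2) (φ b).isLt hlt e
              rw [this, hi', Nat.mod_eq_of_lt (by omega : i' + 1 + 1 < n)]
            · left
              have e0 : f (φ b).val = f 0 := by
                rw [e, show i' + 2 = n from heq, hn_eq]
              have := hinj (φ b).val 0 (φ b).isLt (by omega) e0
              rw [this, hi', show i' + 1 + 1 = n from by omega, Nat.mod_self]
    · rintro ⟨hne, hmod⟩
      have hAdjf : H.Adj (f (φ a).val) (f (φ b).val) := by
        have key : ∀ i j : Fin n, (i.val + 1) % n = j.val → H.Adj (f i.val) (f j.val) := by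
          intro i j hmij
          rcases Nat.lt_or_ge (i.val + 1) n with hlt | hge
          · rw [Nat.mod_eq_of_lt hlt] at hmij
            rw [← hmij]
            exact walk_adj i.val
          · have hieq : i.val + 1 = n := by have := i.isLt; omega
            rw [hieq, Nat.mod_self] at hmij
            rw [← hmij, show i.val = n - 1 from by omega]
            exact hwrap
        rcases hmod with e | e
        · exact key _ _ e
        · exact H.symm (key _ _ e)
      exact ⟨by rw [← h1, ← h2]; exact hAdjf, ha, hb⟩

theorem two_regular_decomp (H : FGraph W)
    (hdeg : ∀ v ∈ H.verts, ∃ y z, y ≠ z ∧ H.Adj v y ∧ H.Adj v z ∧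
      ∀ w, H.Adj v w → w = y ∨ w = z)
    (htri : ∀ a b c, H.Adj a b → H.Adj b c → H.Adj a c → False) :
    H.IsDisjointUnionOfCycles := by
  classical
  choose! Cf h1 h2 h3 h4 h5 using fun v hv => cycle_component H hdeg htri v hv
  refine ⟨H.verts.image Cf, ?_, ?_, ?_, ?_, ?_⟩
  · intro S hS
    obtain ⟨u, hu, rfl⟩ := Finset.mem_image.mp hS
    exact_mod_cast h2 u hu
  · intro S hS T hT hST
    obtain ⟨u, hu, rfl⟩ := Finset.mem_image.mp hS
    obtain ⟨w, hw, rfl⟩ := Finset.mem_image.mp hT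
    rw [Finset.disjoint_left]
    intro a haS haT
    apply hST
    exact Finset.Subset.antisymm
      (h4 u hu a haS (Cf w) (h3 w hw) haT)
      (h4 w hw a haT (Cf u) (h3 u hu) haS)
  · intro v hv
    exact ⟨Cf v, Finset.mem_image_of_mem Cf hv, h1 v hv⟩
  · intro a b hab S hS haS
    obtain ⟨u, hu, rfl⟩ := Finset.mem_image.mp hS
    exact h3 u hu a haS b hab
  · intro S hS
    obtain ⟨u, hu, rfl⟩ := Finset.mem_image.mp hS
    exact h5 u hu

end FGraph

end Decomp
/-- If `G` is a 3-manifold and `ψ : V → ℂ` has nowhere-vanishing real and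
imaginary parts on `V`, then the level set `{ψ = 0}` is either the empty graph or a
disjoint union of cyclic graphs `C_n` with `n ≥ 4`. -/
theorem three_manifold_complex_level_set {V : Type} (G : FGraph V)
    (hG : FGraph.IsManifold 3 G) (ψ : V → ℂ)
    (hψ : ∀ v ∈ G.verts, (ψ v).re ≠ 0 ∧ (ψ v).im ≠ 0) :
    (G.complexLevelSet ψ 0).verts = ∅ ∨
      (G.complexLevelSet ψ 0).IsDisjointUnionOfCycles := by
  right
  apply FGraph.two_regular_decomp
  · intro x hx
    exact FGraph.levelSet_two_neighbors hG hψ hx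
  · exact FGraph.levelSet_no_triangle hG
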